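/- Let G be a finite simple graph with a proper coloring c, let k = ω(G), and let {u,v} be an edge of G. If the set of colors appearing on common neighbors of u and v has size less than k − 2, then the edge {u,v} is not contained in any maximum clique of G; hence deleting {u,v} preserves all maximum cliques. -/
import Mathlib


/-- Let `G` be a finite simple graph with a proper coloring `c`, let
`k = ω(G)`, and let `{u,v}` be an edge of `G`. If the set of colors appearing
on the common neighbors of `u` and `v` has size less than `k - 2`, then the
edge `{u,v}` is not contained in any maximum clique of `G`; hence deleting the
edge `{u,v}` preserves all maximum cliques. -/
theorem edge_color_rule {V : Type*} [Fintype V] [DecidableEq V] {α : Type*}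
    [DecidableEq α] (G : SimpleGraph V) [DecidableRel G.Adj]
    (c : G.Coloring α) {k : ℕ} (hk : G.cliqueNum = k) {u v : V}
    (huv : G.Adj u v)
    (hcol : (((G.neighborFinset u ∩ G.neighborFinset v)).image c).card < k - 2) :
    ∀ S : Finset V, G.IsNClique k S →
      (u ∉ S ∨ v ∉ S) ∧ (G.deleteEdges {s(u, v)}).IsNClique k S := by
  intro S hS
  have hne : u ≠ v := huv.ne
  have hmain : u ∉ S ∨ v ∉ S := by
    by_contra h
    push_neg at h
    obtain ⟨hu, hv⟩ := h
    set T : Finset V := (S.erase u).erase v with hT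
    have hTsub : T ⊆ S := (Finset.erase_subset _ _).trans (Finset.erase_subset _ _)
    have hvT : v ∈ S.erase u := Finset.mem_erase.2 ⟨hne.symm, hv⟩
    have hTcard : T.card = k - 2 := by
      rw [hT, Finset.card_erase_of_mem hvT, Finset.card_erase_of_mem hu, hS.2]
      omega
    have hadj : ∀ w ∈ T, G.Adj u w ∧ G.Adj v w := by
      intro w hw
      have hwS := hTsub hw
      have hwu : w ≠ u := by
        intro h; rw [hT] at hw; exact (Finset.mem_erase.1 (Finset.mem_of_mem_erase hw)).1 h
      have hwv : w ≠ v := by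
        intro h; rw [hT] at hw; exact (Finset.mem_erase.1 hw).1 h
      exact ⟨hS.1 hu hwS (Ne.symm hwu), hS.1 hv hwS (Ne.symm hwv)⟩
    have hinj : Set.InjOn c T := by
      intro w hw x hx hcx
      by_contra hwx
      have : G.Adj w x := hS.1 (hTsub hw) (hTsub hx) hwx
      exact c.valid this hcx
    have himg : (T.image c).card = k - 2 := by
      rw [Finset.card_image_of_injOn hinj, hTcard]
    have hsub : T.image c ⊆ (G.neighborFinset u ∩ G.neighborFinset v).image c := by
      apply Finset.image_subset_image
      intro w hw
      rw [Finset.mem_inter, SimpleGraph.mem_neighborFinset, SimpleGraph.mem_neighborFinset]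
      exact hadj w hw
    have := Finset.card_le_card hsub
    omega
  refine ⟨hmain, ?_, hS.2⟩
  intro a ha b hb hab
  rw [SimpleGraph.deleteEdges_adj]
  refine ⟨hS.1 ha hb hab, ?_⟩
  simp only [Set.mem_singleton_iff, Sym2.eq, Sym2.rel_iff', Prod.mk.injEq, Prod.swap_prod_mk]
  rintro (⟨rfl, rfl⟩ | ⟨rfl, rfl⟩) <;> rcases hmain with h | h <;> first
    | exact h ha | exact h hb
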